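/- (Theorem 4: failure of point identification of the structural quantile function under misclassification, even with an exogenous treatment.) Assume Assumption 2 with p₀ > 0 and p₀ + p₁ < 1; assume U₀ = U₁ = U, that U is uniformly distributed on [0,1] and independent of the pair (D*, Z); assume q(d,·) is continuous and strictly increasing on [0,1] for d = 0,1 and Y = q(D*, U); assume q(0,τ) ≠ q(1,τ); and assume the function G(u) := ℙ(q(0,U) ≤ q(1,u)), u ∈ [0,1], is Lipschitz continuous with G(0) = 0 and G(1) = 1. Then there exists ε̄ > 0 such that for every ε ∈ (0, ε̄] there exist a probability space (Ω', 𝓕', ℙ') carrying measurable maps Y' : Ω' → ℝ, D' : Ω' → {0,1}, D*' : Ω' → {0,1}, Z' : Ω' → S, U' : Ω' → [0,1], and a function q̃ : {0,1} × [0,1] → ℝ with q̃(d,·) strictly increasing on [0,1] for d = 0,1, such that: q̃(1,·) = q(1,·) on [0,1]; q̃(0,τ) ≠ q(0,τ); Y' = q̃(D*', U') holds ℙ'-almost surely; ℙ'({U' ≤ u} ∩ {Z' = z}) = u·ℙ'(Z' = z) for every u ∈ [0,1] and z ∈ S (so exogeneity holds at τ with U₀' = U₁' = U', and rank similarity holds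 trivially); Assumption 2 holds for (Y', D', D*', Z') with misclassification probabilities (p₀ − ε, p₁); and the joint distribution of (Y', D', Z') under ℙ' equals the joint distribution of (Y, D, Z) under ℙ. -/

import Mathlib

open MeasureTheory Set Filter Topology
open scoped ENNReal


/-- squeeze -/
lemma sq_aux {x s m : ℝ} (hx : 0 ≤ x) (hm : 0 ≤ m) (hs : 0 ≤ s)
    (h1 : x ≤ s * m) (h2 : ∀ s', 0 ≤ s' → s' < s → s' * m ≤ x) : x = s * m := by
  rcases eq_or_lt_of_le hm with hm0 | hm0
  · nlinarith
  rcases eq_or_lt_of_le hs with hs0 | hs0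
  · nlinarith
  by_contra hne
  have hlt : x < s * m := lt_of_le_of_ne h1 hne
  set s' : ℝ := x / m with hs'
  have hs'0 : 0 ≤ s' := div_nonneg hx hm
  have hs's : s' < s := by rw [hs', div_lt_iff₀ hm0]; linarith [mul_comm s m]
  set s'' : ℝ := (s' + s) / 2
  have h2' := h2 s'' (by positivity) (by simp only [s'']; linarith)
  have : s' * m < s'' * m := by
    apply mul_lt_mul_of_pos_right _ hm0
    simp only [s'']; linarith
  have hxeq : s' * m = x := by rw [hs', div_mul_cancel₀ x hm0.ne']
  linarith

/-- monotone inverse of continuous strictly monotone function on [0,1] -/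
lemma inv_aux (f : ℝ → ℝ) (hc : ContinuousOn f (Icc 0 1))
    (hm : StrictMonoOn f (Icc 0 1)) :
    ∃ g : ℝ → ℝ, Monotone g ∧ (∀ y, g y ∈ Icc (0:ℝ) 1) ∧
      (∀ y ∈ Icc (f 0) (f 1), f (g y) = y) ∧
      (∀ u ∈ Icc (0:ℝ) 1, ∀ y ∈ Icc (f 0) (f 1), (g y ≤ u ↔ y ≤ f u)) := by
  classical
  set B : ℝ → Set ℝ := fun y => insert 0 {v ∈ Icc (0:ℝ) 1 | f v ≤ y} with hB
  have hne : ∀ y, (B y).Nonempty := fun y => ⟨0, mem_insert _ _⟩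
  have hbdd : ∀ y, BddAbove (B y) := by
    intro y
    refine ⟨1, ?_⟩
    rintro v (rfl | ⟨⟨_, h1⟩, _⟩)
    · norm_num
    · exact h1
  refine ⟨fun y => sSup (B y), ?_, ?_, ?_, ?_⟩
  · intro y₁ y₂ h
    apply csSup_le_csSup (hbdd y₂) (hne y₁)
    rintro v (rfl | ⟨hv1, hv2⟩)
    · exact mem_insert _ _
    · exact mem_insert_of_mem _ ⟨hv1, le_trans hv2 h⟩
  · intro y
    constructor
    · exact le_csSup (hbdd y) (mem_insert _ _)
    · apply csSup_le (hne y)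
      rintro v (rfl | ⟨⟨_, h1⟩, _⟩)
      · norm_num
      · exact h1
  · intro y hy
    obtain ⟨v, hv, hfv⟩ := intermediate_value_Icc (by norm_num : (0:ℝ) ≤ 1) hc hy
    have : IsGreatest (B y) v := by
      constructor
      · exact mem_insert_of_mem _ ⟨hv, le_of_eq hfv⟩
      · rintro w (rfl | ⟨hw1, hw2⟩)
        · exact hv.1
        · by_contra hlt
          push_neg at hlt
          have := hm hv hw1 hlt
          rw [hfv] at this; linarith
    show f (sSup (B y)) = y
    rw [this.csSup_eq, hfv]
  · intro u hu y hy
    constructor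
    · intro h
      obtain ⟨v, hv, hfv⟩ := intermediate_value_Icc (by norm_num : (0:ℝ) ≤ 1) hc hy
      have hg : IsGreatest (B y) v := by
        constructor
        · exact mem_insert_of_mem _ ⟨hv, le_of_eq hfv⟩
        · rintro w (rfl | ⟨hw1, hw2⟩)
          · exact hv.1
          · by_contra hlt
            push_neg at hlt
            have := hm hv hw1 hlt
            rw [hfv] at this; linarith
      simp only at h
      rw [hg.csSup_eq] at h
      calc y = f v := hfv.symm
        _ ≤ f u := hm.monotoneOn hv hu h
    · intro h
      apply csSup_le (hne y)
      rintro v (rfl | ⟨hv1, hv2⟩)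
      · exact hu.1
      · by_contra hlt
        push_neg at hlt
        have := hm hu hv1 hlt
        linarith

/-- measure equality modulo a null set -/
lemma congr_aux {α : Type*} [MeasurableSpace α] (μ : Measure α) {A B N : Set α}
    (h1 : A ⊆ B ∪ N) (h2 : B ⊆ A ∪ N) (hN : μ N = 0) : μ A = μ B := by
  apply le_antisymm
  · calc μ A ≤ μ (B ∪ N) := measure_mono h1
      _ ≤ μ B + μ N := measure_union_le _ _
      _ = μ B := by rw [hN, add_zero]
  · calc μ B ≤ μ (A ∪ N) := measure_mono h2
      _ ≤ μ A + μ N := measure_union_le _ _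
      _ = μ A := by rw [hN, add_zero]

/-- withDensity of an indicator constant -/
lemma wd_aux {α : Type*} [MeasurableSpace α] (μ : Measure α) {E A : Set α}
    (hE : MeasurableSet E) (hA : MeasurableSet A) (κ : ℝ≥0∞) :
    μ.withDensity (E.indicator fun _ => κ) A = κ * μ (A ∩ E) := by
  rw [withDensity_apply _ hA, lintegral_indicator hE, Measure.restrict_restrict hE,
    setLIntegral_const, Set.inter_comm]

set_option maxHeartbeats 4000000 in
theorem stmt6
    {Ω : Type*} [MeasurableSpace Ω] (P : Measure Ω) [IsProbabilityMeasure P]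
    {S : Type*} [MeasurableSpace S] [Countable S] [MeasurableSingletonClass S]
    (τ : ℝ) (hτ : τ ∈ Ioo (0:ℝ) 1)
    (Y : Ω → ℝ) (D Dstar : Ω → Bool) (Z : Ω → S) (U : Ω → ℝ)
    (hYm : Measurable Y) (hDm : Measurable D) (hDstarm : Measurable Dstar)
    (hZm : Measurable Z) (hUm : Measurable U)
    (hU01 : ∀ ω, U ω ∈ Icc (0:ℝ) 1)
    (p₀ p₁ : ℝ) (hp₀ : 0 < p₀) (hp₁ : 0 ≤ p₁) (hp01 : p₀ + p₁ < 1)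
    (hA2 : ∀ (A : Set ℝ), MeasurableSet A → ∀ (z : S) (d : Bool),
      (P {ω | D ω = !d ∧ Dstar ω = d ∧ Y ω ∈ A ∧ Z ω = z}).toReal
        = (bif d then p₁ else p₀) * (P {ω | Dstar ω = d ∧ Y ω ∈ A ∧ Z ω = z}).toReal)
    (hUnif : ∀ u ∈ Icc (0:ℝ) 1, ∀ (d : Bool) (z : S),
      (P {ω | U ω ≤ u ∧ Dstar ω = d ∧ Z ω = z}).toReal
        = u * (P {ω | Dstar ω = d ∧ Z ω = z}).toReal)
    (q : Bool → ℝ → ℝ)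
    (hqc : ∀ d, ContinuousOn (q d) (Icc (0:ℝ) 1))
    (hq : ∀ d, StrictMonoOn (q d) (Icc (0:ℝ) 1))
    (hout : ∀ ω, Y ω = q (Dstar ω) (U ω))
    (hne : q false τ ≠ q true τ)
    (G : ℝ → ℝ)
    (hG : ∀ u : ℝ, G u = (P {ω | q false (U ω) ≤ q true u}).toReal)
    (L : ℝ)
    (hGlip : ∀ u ∈ Icc (0:ℝ) 1, ∀ v ∈ Icc (0:ℝ) 1, |G u - G v| ≤ L * |u - v|)
    (hG0 : G 0 = 0) (hG1 : G 1 = 1)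
    :
    ∃ εbar > (0:ℝ), ∀ ε : ℝ, 0 < ε → ε ≤ εbar →
      ∃ (Ω' : Type) (_ : MeasurableSpace Ω') (P' : Measure Ω')
        (Y' : Ω' → ℝ) (D' Dstar' : Ω' → Bool) (Z' : Ω' → S) (U' : Ω' → ℝ)
        (qt : Bool → ℝ → ℝ),
        IsProbabilityMeasure P'
        ∧ Measurable Y' ∧ Measurable D' ∧ Measurable Dstar' ∧ Measurable Z'
        ∧ Measurable U'
        ∧ (∀ ω', U' ω' ∈ Icc (0:ℝ) 1)
        ∧ (∀ d, StrictMonoOn (qt d) (Icc (0:ℝ) 1))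
        ∧ (∀ u ∈ Icc (0:ℝ) 1, qt true u = q true u)
        ∧ qt false τ ≠ q false τ
        ∧ (∀ᵐ ω' ∂P', Y' ω' = qt (Dstar' ω') (U' ω'))
        ∧ (∀ u ∈ Icc (0:ℝ) 1, ∀ z : S,
            (P' {ω' | U' ω' ≤ u ∧ Z' ω' = z}).toReal
              = u * (P' {ω' | Z' ω' = z}).toReal)
        ∧ (∀ (A : Set ℝ), MeasurableSet A → ∀ (z : S) (d : Bool),
            (P' {ω' | D' ω' = !d ∧ Dstar' ω' = d ∧ Y' ω' ∈ A ∧ Z' ω' = z}).toReal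
              = (bif d then p₁ else p₀ - ε)
                * (P' {ω' | Dstar' ω' = d ∧ Y' ω' ∈ A ∧ Z' ω' = z}).toReal)
        ∧ (p₀ - ε) + p₁ < 1
        ∧ Measure.map (fun ω' => (Y' ω', D' ω', Z' ω')) P'
            = Measure.map (fun ω => (Y ω, D ω, Z ω)) P := by
  classical
  have hp0lt1 : p₀ < 1 := by linarith
  have hp1lt1 : p₁ < 1 := by linarith
  have h1p1 : (0:ℝ) < 1 - p₁ := by linarith
  have h1p0 : (0:ℝ) < 1 - p₀ := by linarith
  obtain ⟨β, hβdef⟩ : ∃ b : ℝ, b = p₀ / (1 - p₁) := ⟨_, rfl⟩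
  have hβpos : 0 < β := hβdef ▸ div_pos hp₀ h1p1
  have hβlt1 : β < 1 := hβdef ▸ (div_lt_one h1p1).2 (by linarith)
  obtain ⟨cst, hcdef⟩ : ∃ b : ℝ, b = p₀ * p₁ / ((1 - p₀) * (1 - p₁)) := ⟨_, rfl⟩
  have hcnn : 0 ≤ cst := by rw [hcdef]; positivity
  obtain ⟨L', hL'def⟩ : ∃ b : ℝ, b = max L 1 := ⟨_, rfl⟩
  have hL'1 : 1 ≤ L' := hL'def ▸ le_max_right _ _
  have hLL' : L ≤ L' := hL'def ▸ le_max_left _ _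
  obtain ⟨K, hKdef⟩ : ∃ b : ℝ, b = 2 * (1 + cst + β * L') := ⟨_, rfl⟩
  have hKpos : 0 < K := by rw [hKdef]; nlinarith
  refine ⟨p₀ * (1 - β) / K, div_pos (by nlinarith) hKpos, ?_⟩
  intro ε hε hεbar
  obtain ⟨δ, hδdef⟩ : ∃ b : ℝ, b = ε / (p₀ * (1 - β) + β * ε) := ⟨_, rfl⟩
  have hden : 0 < p₀ * (1 - β) + β * ε := by nlinarith
  have hδpos : 0 < δ := hδdef ▸ div_pos hε hden
  have hδK : δ ≤ 1 / K := by
    rw [hδdef, div_le_div_iff₀ hden hKpos]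
    rw [le_div_iff₀ hKpos] at hεbar
    nlinarith
  have hApos : (0:ℝ) < 1 + cst + β * L' := by nlinarith
  have hδhalf : δ * (1 + cst + β * L') ≤ 1 / 2 := by
    have h := mul_le_mul_of_nonneg_right hδK (le_of_lt hApos)
    have h2 : 1 / K * (1 + cst + β * L') = 1 / 2 := by
      rw [hKdef]; field_simp
    linarith
  have hL'pos : (0:ℝ) < L' := by linarith
  have hg1 : 0 ≤ δ * cst := by positivity
  have hg2 : 0 ≤ δ * (β * L') := by positivity
  have hg3 : δ * (1 + cst + β * L') = δ + δ * cst + δ * (β * L') := by ring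
  have hδhalf' : δ + δ * cst + δ * (β * L') ≤ 1 / 2 := by rw [← hg3]; exact hδhalf
  have hδlt1 : δ < 1 := by linarith
  have hcδ1 : cst * δ ≤ 1 / 2 := by rw [mul_comm]; linarith
  have hδβL : δ * β * L' ≤ 1 / 2 := by rw [mul_assoc]; linarith
  have hδβhalf : δ * β ≤ 1 / 2 := by
    have h := mul_le_mul_of_nonneg_left hL'1 (mul_nonneg hδpos.le hβpos.le)
    rw [mul_one] at h
    calc δ * β ≤ δ * β * L' := h
      _ ≤ 1 / 2 := hδβL
  have hδβpos : 0 < δ * β := by positivity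
  have h1δβ : (0:ℝ) < 1 - δ * β := by linarith
  have hδε : δ * (p₀ * (1 - β) + β * ε) = ε := by
    rw [hδdef]; exact div_mul_cancel₀ ε (ne_of_gt hden)
  have hkey : (1 - δ) * p₀ = (p₀ - ε) * (1 - δ * β) := by linear_combination -hδε
  have hβc : δ * p₀ + (cst * δ) * (1 - p₀) = δ * β := by
    rw [hcdef, hβdef]; field_simp; ring

  -- measurability of q false ∘ U
  have mq0U : Measurable fun ω => q false (U ω) := by
    have h1 : Continuous ((Icc (0:ℝ) 1).restrict (q false)) := (hqc false).restrict
    exact h1.measurable.comp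
      (hUm.subtype_mk : Measurable fun ω => (⟨U ω, hU01 ω⟩ : Icc (0:ℝ) 1))
  -- real-valued measure infrastructure
  have PRnn : ∀ A : Set Ω, 0 ≤ (P A).toReal := fun A => ENNReal.toReal_nonneg
  have PRmono : ∀ {A B : Set Ω}, A ⊆ B → (P A).toReal ≤ (P B).toReal :=
    fun h => ENNReal.toReal_mono (measure_ne_top P _) (measure_mono h)
  have PRsplit : ∀ (A E : Set Ω), MeasurableSet E →
      (P A).toReal = (P (A ∩ E)).toReal + (P (A ∩ Eᶜ)).toReal := by
    intro A E hE
    rw [← ENNReal.toReal_add (measure_ne_top P _) (measure_ne_top P _)]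
    congr 1
    rw [← Set.diff_eq]
    exact (measure_inter_add_diff A hE).symm
  -- normalized uniformity
  have hUnif' : ∀ u ∈ Icc (0:ℝ) 1, ∀ (d : Bool) (z : S),
      (P {ω | Dstar ω = d ∧ U ω ≤ u ∧ Z ω = z}).toReal
        = u * (P {ω | Dstar ω = d ∧ Z ω = z}).toReal := by
    intro u hu d z
    have h := hUnif u hu d z
    have e : {ω | U ω ≤ u ∧ Dstar ω = d ∧ Z ω = z}
        = {ω | Dstar ω = d ∧ U ω ≤ u ∧ Z ω = z} := by
      ext ω; simp only [mem_setOf_eq]; tauto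
    rwa [e] at h
  -- masses: d = false
  have mass1 : ∀ z : S, ∀ (A : Set ℝ), MeasurableSet A →
      (P {ω | D ω = true ∧ Dstar ω = false ∧ Y ω ∈ A ∧ Z ω = z}).toReal
        = p₀ * (P {ω | Dstar ω = false ∧ Y ω ∈ A ∧ Z ω = z}).toReal := by
    intro z A hA; simpa using hA2 A hA z false
  have mass1t : ∀ z : S, ∀ (A : Set ℝ), MeasurableSet A →
      (P {ω | D ω = false ∧ Dstar ω = true ∧ Y ω ∈ A ∧ Z ω = z}).toReal
        = p₁ * (P {ω | Dstar ω = true ∧ Y ω ∈ A ∧ Z ω = z}).toReal := by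
    intro z A hA; simpa using hA2 A hA z true
  have splitD : ∀ (T : Set Ω),
      (P T).toReal = (P (T ∩ {ω | D ω = true})).toReal
        + (P (T ∩ {ω | D ω = false})).toReal := by
    intro T
    have h := PRsplit T {ω | D ω = true} (hDm (measurableSet_singleton true))
    have e : T ∩ {ω | D ω = true}ᶜ = T ∩ {ω | D ω = false} := by
      ext ω; simp [Bool.not_eq_true]
    rwa [e] at h
  have mass0 : ∀ z : S, ∀ (A : Set ℝ), MeasurableSet A →
      (P {ω | D ω = false ∧ Dstar ω = false ∧ Y ω ∈ A ∧ Z ω = z}).toReal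
        = (1 - p₀) * (P {ω | Dstar ω = false ∧ Y ω ∈ A ∧ Z ω = z}).toReal := by
    intro z A hA
    have h := splitD {ω | Dstar ω = false ∧ Y ω ∈ A ∧ Z ω = z}
    have e1 : {ω | Dstar ω = false ∧ Y ω ∈ A ∧ Z ω = z} ∩ {ω | D ω = true}
        = {ω | D ω = true ∧ Dstar ω = false ∧ Y ω ∈ A ∧ Z ω = z} := by
      ext ω; simp only [mem_setOf_eq, mem_inter_iff]; tauto
    have e2 : {ω | Dstar ω = false ∧ Y ω ∈ A ∧ Z ω = z} ∩ {ω | D ω = false}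
        = {ω | D ω = false ∧ Dstar ω = false ∧ Y ω ∈ A ∧ Z ω = z} := by
      ext ω; simp only [mem_setOf_eq, mem_inter_iff]; tauto
    rw [e1, e2, mass1 z A hA] at h
    linarith
  -- outcome/rank set identity on the untreated
  have setYU : ∀ u : ℝ, u ∈ Icc (0:ℝ) 1 → ∀ ω : Ω,
      Dstar ω = false → (Y ω ≤ q false u ↔ U ω ≤ u) := by
    intro u hu ω hd
    rw [hout ω, hd]
    exact (hq false).le_iff_le (hU01 ω) hu
  -- drop Y ∈ univ
  have dropY : ∀ (pd pds : Bool) (z : S),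
      {ω | D ω = pd ∧ Dstar ω = pds ∧ Y ω ∈ (univ : Set ℝ) ∧ Z ω = z}
        = {ω | D ω = pd ∧ Dstar ω = pds ∧ Z ω = z} := by
    intro pd pds z; ext ω; simp
  have dropY2 : ∀ (pds : Bool) (z : S),
      {ω | Dstar ω = pds ∧ Y ω ∈ (univ : Set ℝ) ∧ Z ω = z}
        = {ω | Dstar ω = pds ∧ Z ω = z} := by
    intro pds z; ext ω; simp
  -- uniformity within misclassification cells
  have uE1 : ∀ z : S, ∀ u ∈ Icc (0:ℝ) 1,
      (P {ω | D ω = true ∧ Dstar ω = false ∧ U ω ≤ u ∧ Z ω = z}).toReal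
        = u * (P {ω | D ω = true ∧ Dstar ω = false ∧ Z ω = z}).toReal := by
    intro z u hu
    have h1 := mass1 z (Iic (q false u)) measurableSet_Iic
    have e1 : {ω | D ω = true ∧ Dstar ω = false ∧ Y ω ∈ Iic (q false u) ∧ Z ω = z}
        = {ω | D ω = true ∧ Dstar ω = false ∧ U ω ≤ u ∧ Z ω = z} := by
      ext ω; simp only [mem_setOf_eq, mem_Iic]
      constructor
      · rintro ⟨a, b, c3, d4⟩; exact ⟨a, b, (setYU u hu ω b).1 c3, d4⟩
      · rintro ⟨a, b, c3, d4⟩; exact ⟨a, b, (setYU u hu ω b).2 c3, d4⟩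
    have e2 : {ω | Dstar ω = false ∧ Y ω ∈ Iic (q false u) ∧ Z ω = z}
        = {ω | Dstar ω = false ∧ U ω ≤ u ∧ Z ω = z} := by
      ext ω; simp only [mem_setOf_eq, mem_Iic]
      constructor
      · rintro ⟨b, c3, d4⟩; exact ⟨b, (setYU u hu ω b).1 c3, d4⟩
      · rintro ⟨b, c3, d4⟩; exact ⟨b, (setYU u hu ω b).2 c3, d4⟩
    rw [e1, e2, hUnif' u hu false z] at h1
    have h3 := mass1 z univ MeasurableSet.univ
    rw [dropY, dropY2] at h3
    rw [h1, h3]; ring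
  have uE0 : ∀ z : S, ∀ u ∈ Icc (0:ℝ) 1,
      (P {ω | D ω = false ∧ Dstar ω = false ∧ U ω ≤ u ∧ Z ω = z}).toReal
        = u * (P {ω | D ω = false ∧ Dstar ω = false ∧ Z ω = z}).toReal := by
    intro z u hu
    have h := splitD {ω | Dstar ω = false ∧ U ω ≤ u ∧ Z ω = z}
    have e1 : {ω | Dstar ω = false ∧ U ω ≤ u ∧ Z ω = z} ∩ {ω | D ω = true}
        = {ω | D ω = true ∧ Dstar ω = false ∧ U ω ≤ u ∧ Z ω = z} := by
      ext ω; simp only [mem_setOf_eq, mem_inter_iff]; tauto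
    have e2 : {ω | Dstar ω = false ∧ U ω ≤ u ∧ Z ω = z} ∩ {ω | D ω = false}
        = {ω | D ω = false ∧ Dstar ω = false ∧ U ω ≤ u ∧ Z ω = z} := by
      ext ω; simp only [mem_setOf_eq, mem_inter_iff]; tauto
    rw [e1, e2, hUnif' u hu false z, uE1 z u hu] at h
    have h0 := mass0 z univ MeasurableSet.univ
    rw [dropY, dropY2] at h0
    have h1 := mass1 z univ MeasurableSet.univ
    rw [dropY, dropY2] at h1
    rw [h0]
    rw [h1] at h
    linear_combination -h

  -- unconditional uniformity of U
  have uuniv : ∀ u ∈ Icc (0:ℝ) 1, (P {ω | U ω ≤ u}).toReal = u := by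
    intro u hu
    have hms : ∀ dz : Bool × S,
        MeasurableSet {ω | Dstar ω = dz.1 ∧ U ω ≤ u ∧ Z ω = dz.2} := fun dz =>
      (hDstarm (measurableSet_singleton dz.1)).inter
        ((hUm measurableSet_Iic).inter (hZm (measurableSet_singleton dz.2)))
    have hms2 : ∀ dz : Bool × S,
        MeasurableSet {ω | Dstar ω = dz.1 ∧ Z ω = dz.2} := fun dz =>
      (hDstarm (measurableSet_singleton dz.1)).inter (hZm (measurableSet_singleton dz.2))
    have hpart : {ω | U ω ≤ u} = ⋃ dz : Bool × S,
        {ω | Dstar ω = dz.1 ∧ U ω ≤ u ∧ Z ω = dz.2} := by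
      ext ω
      simp only [mem_iUnion, mem_setOf_eq]
      constructor
      · intro h; exact ⟨⟨Dstar ω, Z ω⟩, rfl, h, rfl⟩
      · rintro ⟨dz, _, h, _⟩; exact h
    have hdisj : Pairwise (Function.onFun Disjoint fun dz : Bool × S =>
        {ω | Dstar ω = dz.1 ∧ U ω ≤ u ∧ Z ω = dz.2}) := by
      intro i j hij
      simp only [Function.onFun]
      rw [Set.disjoint_left]
      rintro ω ⟨h1, _, h3⟩ ⟨h1', _, h3'⟩
      exact hij (Prod.ext (h1 ▸ h1' : i.1 = j.1) (h3 ▸ h3' : i.2 = j.2))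
    have hdisj2 : Pairwise (Function.onFun Disjoint fun dz : Bool × S =>
        {ω | Dstar ω = dz.1 ∧ Z ω = dz.2}) := by
      intro i j hij
      simp only [Function.onFun]
      rw [Set.disjoint_left]
      rintro ω ⟨h1, h3⟩ ⟨h1', h3'⟩
      exact hij (Prod.ext (h1 ▸ h1' : i.1 = j.1) (h3 ▸ h3' : i.2 = j.2))
    have hterm : ∀ dz : Bool × S, P {ω | Dstar ω = dz.1 ∧ U ω ≤ u ∧ Z ω = dz.2}
        = ENNReal.ofReal u * P {ω | Dstar ω = dz.1 ∧ Z ω = dz.2} := by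
      intro dz
      have h := hUnif' u hu dz.1 dz.2
      rw [← ENNReal.ofReal_toReal
        (measure_ne_top P {ω | Dstar ω = dz.1 ∧ U ω ≤ u ∧ Z ω = dz.2}), h,
        ENNReal.ofReal_mul hu.1,
        ENNReal.ofReal_toReal (measure_ne_top P _)]
    have hpart2 : (univ : Set Ω) = ⋃ dz : Bool × S,
        {ω | Dstar ω = dz.1 ∧ Z ω = dz.2} := by
      ext ω
      simp only [mem_iUnion, mem_setOf_eq, mem_univ, true_iff]
      exact ⟨⟨Dstar ω, Z ω⟩, rfl, rfl⟩
    have htot : ∑' dz : Bool × S, P {ω | Dstar ω = dz.1 ∧ Z ω = dz.2} = 1 := by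
      rw [← measure_iUnion hdisj2 hms2, ← hpart2, measure_univ]
    rw [hpart, measure_iUnion hdisj hms]
    simp only [hterm]
    rw [ENNReal.tsum_mul_left, htot, mul_one, ENNReal.toReal_ofReal hu.1]
  -- the q-false composed event is independent of uniform cells
  have keyL : ∀ (cc : ℝ) (W : Set Ω) (m : ℝ), 0 ≤ m →
      (∀ u ∈ Icc (0:ℝ) 1, (P ({ω | U ω ≤ u} ∩ W)).toReal = u * m) →
      (P ({ω | q false (U ω) ≤ cc} ∩ W)).toReal
        = (P {ω | q false (U ω) ≤ cc}).toReal * m := by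
    intro cc W m hm hWu
    by_cases hcc : q false 0 ≤ cc
    · have hmem0 : (0:ℝ) ∈ {v ∈ Icc (0:ℝ) 1 | q false v ≤ cc} :=
        ⟨left_mem_Icc.2 zero_le_one, hcc⟩
      have hne : {v ∈ Icc (0:ℝ) 1 | q false v ≤ cc}.Nonempty := ⟨0, hmem0⟩
      have hbdd : BddAbove {v ∈ Icc (0:ℝ) 1 | q false v ≤ cc} :=
        ⟨1, fun v hv => hv.1.2⟩
      have hs0 : 0 ≤ sSup {v ∈ Icc (0:ℝ) 1 | q false v ≤ cc} := le_csSup hbdd hmem0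
      have hs1 : sSup {v ∈ Icc (0:ℝ) 1 | q false v ≤ cc} ≤ 1 :=
        csSup_le hne fun v hv => hv.1.2
      have main : ∀ (W' : Set Ω) (m' : ℝ), 0 ≤ m' →
          (∀ u ∈ Icc (0:ℝ) 1, (P ({ω | U ω ≤ u} ∩ W')).toReal = u * m') →
          (P ({ω | q false (U ω) ≤ cc} ∩ W')).toReal
            = sSup {v ∈ Icc (0:ℝ) 1 | q false v ≤ cc} * m' := by
        intro W' m' hm' hWu'
        apply sq_aux (PRnn _) hm' hs0
        · have hsub : {ω | q false (U ω) ≤ cc} ∩ W'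
              ⊆ {ω | U ω ≤ sSup {v ∈ Icc (0:ℝ) 1 | q false v ≤ cc}} ∩ W' := by
            rintro ω ⟨h1, h2⟩
            exact ⟨le_csSup hbdd ⟨hU01 ω, h1⟩, h2⟩
          calc (P ({ω | q false (U ω) ≤ cc} ∩ W')).toReal
              ≤ (P ({ω | U ω ≤ sSup {v ∈ Icc (0:ℝ) 1 | q false v ≤ cc}} ∩ W')).toReal :=
                PRmono hsub
            _ = sSup {v ∈ Icc (0:ℝ) 1 | q false v ≤ cc} * m' := hWu' _ ⟨hs0, hs1⟩
        · intro s' hs'0 hs's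
          obtain ⟨v, hv, hs'v⟩ := exists_lt_of_lt_csSup hne hs's
          have hsub : {ω | U ω ≤ s'} ∩ W' ⊆ {ω | q false (U ω) ≤ cc} ∩ W' := by
            rintro ω ⟨h1, h2⟩
            refine ⟨le_trans ((hq false).monotoneOn (hU01 ω) hv.1
              (le_of_lt (lt_of_le_of_lt h1 hs'v))) hv.2, h2⟩
          calc s' * m' = (P ({ω | U ω ≤ s'} ∩ W')).toReal :=
                (hWu' s' ⟨hs'0, le_trans (le_of_lt hs's) hs1⟩).symm
            _ ≤ (P ({ω | q false (U ω) ≤ cc} ∩ W')).toReal := PRmono hsub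
      have huniv : ∀ u ∈ Icc (0:ℝ) 1,
          (P ({ω | U ω ≤ u} ∩ univ)).toReal = u * 1 := by
        intro u hu; rw [inter_univ, mul_one]; exact uuniv u hu
      have h1 := main W m hm hWu
      have h2 := main univ 1 zero_le_one huniv
      rw [inter_univ, mul_one] at h2
      rw [h1, h2]
    · have hT : {ω | q false (U ω) ≤ cc} = (∅ : Set Ω) := by
        ext ω
        simp only [mem_setOf_eq, mem_empty_iff_false, iff_false, not_le]
        exact lt_of_lt_of_le (not_le.1 hcc)
          ((hq false).monotoneOn (left_mem_Icc.2 zero_le_one) (hU01 ω) (hU01 ω).1)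
      rw [hT, empty_inter]
      simp
  -- null sets from G 0 = 0, G 1 = 1
  have mT : ∀ cc : ℝ, MeasurableSet {ω | q false (U ω) ≤ cc} :=
    fun cc => mq0U measurableSet_Iic
  have nullN0 : P {ω | q false (U ω) ≤ q true 0} = 0 := by
    have h := hG 0
    rw [hG0] at h
    rcases (ENNReal.toReal_eq_zero_iff _).1 h.symm with h' | h'
    · exact h'
    · exact absurd h' (measure_ne_top P _)
  have nullN1 : P {ω | ¬ q false (U ω) ≤ q true 1} = 0 := by
    have h := hG 1
    rw [hG1] at h
    have hfull : P {ω | q false (U ω) ≤ q true 1} = 1 := by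
      rw [← ENNReal.ofReal_toReal (measure_ne_top P {ω | q false (U ω) ≤ q true 1}), ← h]
      simp
    have hcpl := measure_compl (mT (q true 1)) (measure_ne_top P _)
    rw [hfull, measure_univ, tsub_self] at hcpl
    exact hcpl
  have hτIcc : τ ∈ Icc (0:ℝ) 1 := ⟨hτ.1.le, hτ.2.le⟩
  -- the distortion is real:  G τ ≠ τ
  have hGτ : G τ ≠ τ := by
    rcases lt_or_gt_of_ne hne with hlt | hgt
    · have hcw : ContinuousWithinAt (q false) (Icc 0 1) τ := (hqc false) τ hτIcc
      have h1 : 𝓝[Ioo τ 1] τ ≤ 𝓝[Icc 0 1] τ :=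
        nhdsWithin_mono τ (fun x hx => ⟨le_trans hτ.1.le hx.1.le, hx.2.le⟩)
      have h2 : {x | q false x < q true τ} ∈ 𝓝[Ioo τ 1] τ := h1 (hcw (Iio_mem_nhds hlt))
      haveI hNB : (𝓝[Ioo τ 1] τ).NeBot := left_nhdsWithin_Ioo_neBot hτ.2
      obtain ⟨x, hxI, hx2⟩ :=
        ((eventually_mem_nhdsWithin (s := Ioo τ 1) (a := τ)).and h2).exists
      have hxIcc : x ∈ Icc (0:ℝ) 1 := ⟨(hτ.1.trans hxI.1).le, hxI.2.le⟩
      have hsub : {ω | U ω ≤ x} ⊆ {ω | q false (U ω) ≤ q true τ} := fun ω h =>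
        le_of_lt (lt_of_le_of_lt ((hq false).monotoneOn (hU01 ω) hxIcc h) hx2)
      have hxG : x ≤ G τ := by
        rw [hG τ]
        calc x = (P {ω | U ω ≤ x}).toReal := (uuniv x hxIcc).symm
          _ ≤ (P {ω | q false (U ω) ≤ q true τ}).toReal := PRmono hsub
      exact ne_of_gt (lt_of_lt_of_le hxI.1 hxG)
    · have hcw : ContinuousWithinAt (q false) (Icc 0 1) τ := (hqc false) τ hτIcc
      have h1 : 𝓝[Ioo 0 τ] τ ≤ 𝓝[Icc 0 1] τ :=
        nhdsWithin_mono τ (fun x hx => ⟨hx.1.le, (hx.2.trans hτ.2).le⟩)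
      have h2 : {x | q true τ < q false x} ∈ 𝓝[Ioo 0 τ] τ := h1 (hcw (Ioi_mem_nhds hgt))
      haveI hNB : (𝓝[Ioo 0 τ] τ).NeBot := right_nhdsWithin_Ioo_neBot hτ.1
      obtain ⟨x, hxI, hx2⟩ :=
        ((eventually_mem_nhdsWithin (s := Ioo 0 τ) (a := τ)).and h2).exists
      have hxIcc : x ∈ Icc (0:ℝ) 1 := ⟨hxI.1.le, (hxI.2.trans hτ.2).le⟩
      have hsub : {ω | q false (U ω) ≤ q true τ} ⊆ {ω | U ω ≤ x} := by
        intro ω h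
        by_contra hcon
        simp only [mem_setOf_eq, not_le] at hcon
        have := (hq false).monotoneOn hxIcc (hU01 ω) hcon.le
        have : q false x ≤ q true τ := le_trans this h
        exact absurd (lt_of_lt_of_le hx2 this) (lt_irrefl _)
      have hxG : G τ ≤ x := by
        rw [hG τ]
        calc (P {ω | q false (U ω) ≤ q true τ}).toReal
            ≤ (P {ω | U ω ≤ x}).toReal := PRmono hsub
          _ = x := uuniv x hxIcc
      exact ne_of_lt (lt_of_le_of_lt hxG hxI.2)

  -- the rank distortion φ
  obtain ⟨φ, hφdef⟩ : ∃ f : ℝ → ℝ, f = fun u => (u - δ * β * G u) / (1 - δ * β) :=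
    ⟨_, rfl⟩
  have hφval : ∀ u, φ u = (u - δ * β * G u) / (1 - δ * β) := fun u => by rw [hφdef]
  have hφ0 : φ 0 = 0 := by rw [hφval, hG0]; simp
  have hφ1 : φ 1 = 1 := by rw [hφval, hG1]; field_simp
  have hφmono : StrictMonoOn φ (Icc 0 1) := by
    intro u hu v hv huv
    rw [hφval, hφval, div_lt_div_iff_of_pos_right h1δβ]
    have h2 : |v - u| = v - u := abs_of_nonneg (by linarith)
    have h3 : G v - G u ≤ L' * (v - u) := by
      have h4 := (abs_le.1 (hGlip v hv u hu)).2
      rw [h2] at h4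
      exact le_trans h4 (mul_le_mul_of_nonneg_right hLL' (by linarith))
    have a1 := mul_le_mul_of_nonneg_left h3 hδβpos.le
    have a2 := mul_le_mul_of_nonneg_right hδβL (sub_nonneg.2 huv.le)
    have a3 : (1:ℝ)/2 * (v - u) < v - u := by linarith
    linarith only [a1, a2, a3, huv]
  have hφcont : ContinuousOn φ (Icc 0 1) := by
    have hlip : LipschitzOnWith (Real.toNNReal ((1 + δ * β * L') / (1 - δ * β)))
        φ (Icc 0 1) := by
      apply LipschitzOnWith.of_dist_le_mul
      intro x hx y hy
      rw [Real.dist_eq, Real.dist_eq, hφval, hφval,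
        Real.coe_toNNReal _ (by positivity)]
      have h1 : |G x - G y| ≤ L' * |x - y| :=
        le_trans (hGlip x hx y hy) (mul_le_mul_of_nonneg_right hLL' (abs_nonneg _))
      have h3 : (x - δ * β * G x) / (1 - δ * β) - (y - δ * β * G y) / (1 - δ * β)
          = ((x - y) - δ * β * (G x - G y)) / (1 - δ * β) := by
        rw [div_sub_div_same]; congr 1; ring
      rw [h3, abs_div, abs_of_pos h1δβ, div_mul_eq_mul_div,
        div_le_div_iff_of_pos_right h1δβ]
      have h4 : |(x - y) - δ * β * (G x - G y)| ≤ |x - y| + |δ * β * (G x - G y)| := by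
        rw [sub_eq_add_neg]
        refine le_trans (abs_add_le _ _) ?_
        rw [abs_neg]
      have h5 : |δ * β * (G x - G y)| = δ * β * |G x - G y| := by
        rw [abs_mul, abs_of_pos hδβpos]
      have a1 := mul_le_mul_of_nonneg_left h1 hδβpos.le
      rw [h5] at h4
      linarith only [h4, a1]
    exact hlip.continuousOn
  have hφmem : ∀ u ∈ Icc (0:ℝ) 1, φ u ∈ Icc (0:ℝ) 1 := by
    intro u hu
    constructor
    · rw [← hφ0]; exact hφmono.monotoneOn (left_mem_Icc.2 zero_le_one) hu hu.1
    · rw [← hφ1]; exact hφmono.monotoneOn hu (right_mem_Icc.2 zero_le_one) hu.2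
  -- inverse of φ and of q true
  obtain ⟨ψ, hψmono, hψmem, hψinv, hψiff⟩ := inv_aux φ hφcont hφmono
  rw [hφ0, hφ1] at hψinv hψiff
  obtain ⟨hf, hhmono, hhmem, hhinv, hhiff⟩ := inv_aux (q true) (hqc true) (hq true)
  -- the distorted structural function
  obtain ⟨qt, hqtdef⟩ : ∃ f : Bool → ℝ → ℝ,
      f = fun d u => if d then q true u else q false (φ u) := ⟨_, rfl⟩
  have hqt_true : ∀ u, qt true u = q true u := fun u => by rw [hqtdef]; simp
  have hqt_false : ∀ u, qt false u = q false (φ u) := fun u => by rw [hqtdef]; simp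
  have hqtmono : ∀ d, StrictMonoOn (qt d) (Icc (0:ℝ) 1) := by
    intro d
    cases d
    · intro u hu v hv huv
      rw [hqt_false, hqt_false]
      exact hq false (hφmem u hu) (hφmem v hv) (hφmono hu hv huv)
    · intro u hu v hv huv
      rw [hqt_true, hqt_true]
      exact hq true hu hv huv
  have hφτ : φ τ ≠ τ := by
    rw [hφval]
    intro hcon
    apply hGτ
    have h1 : τ - δ * β * G τ = τ * (1 - δ * β) := (div_eq_iff (ne_of_gt h1δβ)).1 hcon
    have h3 : δ * β * G τ = δ * β * τ := by linear_combination -h1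
    exact mul_left_cancel₀ (ne_of_gt hδβpos) h3
  have hqτ : qt false τ ≠ q false τ := by
    rw [hqt_false]
    intro hcon
    exact hφτ ((hq false).injOn (hφmem τ hτIcc) hτIcc hcon)

  -- events for the density
  have mEt : MeasurableSet {ω | Dstar ω = true} := hDstarm (measurableSet_singleton true)
  have mF1 : MeasurableSet {ω | D ω = true ∧ Dstar ω = false} :=
    (hDm (measurableSet_singleton true)).inter (hDstarm (measurableSet_singleton false))
  have mF0 : MeasurableSet {ω | D ω = false ∧ Dstar ω = false} :=
    (hDm (measurableSet_singleton false)).inter (hDstarm (measurableSet_singleton false))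
  -- withDensity helper
  have happ : ∀ (E : Set Ω), MeasurableSet E → ∀ (κ : ℝ) (A : Set Ω), MeasurableSet A →
      (P.withDensity (E.indicator fun _ => ENNReal.ofReal κ)) A
        = ENNReal.ofReal κ * P (A ∩ E) :=
    fun E hE κ A hA => wd_aux P hE hA _
  -- the two pieces
  obtain ⟨P₁, hP₁def⟩ : ∃ μ : Measure Ω, μ =
      P.withDensity ({ω | Dstar ω = true}.indicator fun _ => ENNReal.ofReal 1)
      + P.withDensity ({ω | D ω = true ∧ Dstar ω = false}.indicator
          fun _ => ENNReal.ofReal (1 - δ))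
      + P.withDensity ({ω | D ω = false ∧ Dstar ω = false}.indicator
          fun _ => ENNReal.ofReal (1 - cst * δ)) := ⟨_, rfl⟩
  obtain ⟨P₂, hP₂def⟩ : ∃ μ : Measure Ω, μ =
      P.withDensity ({ω | D ω = true ∧ Dstar ω = false}.indicator
          fun _ => ENNReal.ofReal δ)
      + P.withDensity ({ω | D ω = false ∧ Dstar ω = false}.indicator
          fun _ => ENNReal.ofReal (cst * δ)) := ⟨_, rfl⟩
  have hP₁apps : ∀ A : Set Ω, MeasurableSet A → P₁ A
      = ENNReal.ofReal 1 * P (A ∩ {ω | Dstar ω = true})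
        + ENNReal.ofReal (1 - δ) * P (A ∩ {ω | D ω = true ∧ Dstar ω = false})
        + ENNReal.ofReal (1 - cst * δ) * P (A ∩ {ω | D ω = false ∧ Dstar ω = false}) := by
    intro A hA
    rw [hP₁def, Measure.add_apply, Measure.add_apply,
      happ _ mEt _ _ hA, happ _ mF1 _ _ hA, happ _ mF0 _ _ hA]
  have hP₂apps : ∀ A : Set Ω, MeasurableSet A → P₂ A
      = ENNReal.ofReal δ * P (A ∩ {ω | D ω = true ∧ Dstar ω = false})
        + ENNReal.ofReal (cst * δ) * P (A ∩ {ω | D ω = false ∧ Dstar ω = false}) := by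
    intro A hA
    rw [hP₂def, Measure.add_apply, happ _ mF1 _ _ hA, happ _ mF0 _ _ hA]
  have hterm_ne : ∀ (κ : ℝ) (B : Set Ω), ENNReal.ofReal κ * P B ≠ ⊤ :=
    fun κ B => ENNReal.mul_ne_top ENNReal.ofReal_ne_top (measure_ne_top P _)
  have hP₁fin : ∀ A : Set Ω, MeasurableSet A → P₁ A ≠ ⊤ := by
    intro A hA
    rw [hP₁apps A hA]
    exact ENNReal.add_ne_top.2 ⟨ENNReal.add_ne_top.2 ⟨hterm_ne _ _, hterm_ne _ _⟩, hterm_ne _ _⟩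
  have hP₂fin : ∀ A : Set Ω, MeasurableSet A → P₂ A ≠ ⊤ := by
    intro A hA
    rw [hP₂apps A hA]
    exact ENNReal.add_ne_top.2 ⟨hterm_ne _ _, hterm_ne _ _⟩
  have hδ01 : 0 ≤ δ ∧ δ ≤ 1 := ⟨hδpos.le, hδlt1.le⟩
  have hcδ01 : 0 ≤ cst * δ ∧ cst * δ ≤ 1 := ⟨mul_nonneg hcnn hδpos.le, by linarith⟩
  have hP₁app : ∀ A : Set Ω, MeasurableSet A → (P₁ A).toReal
      = (P (A ∩ {ω | Dstar ω = true})).toReal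
        + (1 - δ) * (P (A ∩ {ω | D ω = true ∧ Dstar ω = false})).toReal
        + (1 - cst * δ) * (P (A ∩ {ω | D ω = false ∧ Dstar ω = false})).toReal := by
    intro A hA
    rw [hP₁apps A hA, ENNReal.toReal_add (ENNReal.add_ne_top.2 ⟨hterm_ne _ _, hterm_ne _ _⟩)
        (hterm_ne _ _), ENNReal.toReal_add (hterm_ne _ _) (hterm_ne _ _),
      ENNReal.toReal_mul, ENNReal.toReal_mul, ENNReal.toReal_mul,
      ENNReal.toReal_ofReal (by norm_num : (0:ℝ) ≤ 1),
      ENNReal.toReal_ofReal (by linarith : (0:ℝ) ≤ 1 - δ),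
      ENNReal.toReal_ofReal (by linarith : (0:ℝ) ≤ 1 - cst * δ), one_mul]
  have hP₂app : ∀ A : Set Ω, MeasurableSet A → (P₂ A).toReal
      = δ * (P (A ∩ {ω | D ω = true ∧ Dstar ω = false})).toReal
        + (cst * δ) * (P (A ∩ {ω | D ω = false ∧ Dstar ω = false})).toReal := by
    intro A hA
    rw [hP₂apps A hA, ENNReal.toReal_add (hterm_ne _ _) (hterm_ne _ _),
      ENNReal.toReal_mul, ENNReal.toReal_mul,
      ENNReal.toReal_ofReal hδpos.le, ENNReal.toReal_ofReal hcδ01.1]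
  -- P₁ + P₂ = P
  have hpart3 : ∀ A : Set Ω, MeasurableSet A → P A
      = P (A ∩ {ω | Dstar ω = true}) + P (A ∩ {ω | D ω = true ∧ Dstar ω = false})
        + P (A ∩ {ω | D ω = false ∧ Dstar ω = false}) := by
    intro A hA
    have h1 := measure_inter_add_diff (μ := P) A mEt
    have e1 : A \ {ω | Dstar ω = true} = A ∩ {ω | Dstar ω = false} := by
      ext ω; simp [Set.diff_eq, Bool.not_eq_true]
    rw [e1] at h1
    have h2 := measure_inter_add_diff (μ := P) (A ∩ {ω | Dstar ω = false})
      (show MeasurableSet {ω | D ω = true} from hDm (measurableSet_singleton true))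
    have e2 : A ∩ {ω | Dstar ω = false} ∩ {ω | D ω = true}
        = A ∩ {ω | D ω = true ∧ Dstar ω = false} := by
      ext ω; simp only [mem_inter_iff, mem_setOf_eq]; tauto
    have e3 : (A ∩ {ω | Dstar ω = false}) \ {ω | D ω = true}
        = A ∩ {ω | D ω = false ∧ Dstar ω = false} := by
      ext ω; simp only [Set.mem_diff, mem_inter_iff, mem_setOf_eq, Bool.not_eq_true]; tauto
    rw [e2, e3] at h2
    rw [← h1, ← h2]
    ring
  have hsum : P₁ + P₂ = P := by
    apply Measure.ext
    intro A hA
    rw [Measure.add_apply, hP₁apps A hA, hP₂apps A hA]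
    have c1 : ENNReal.ofReal (1 - δ) * P (A ∩ {ω | D ω = true ∧ Dstar ω = false})
        + ENNReal.ofReal δ * P (A ∩ {ω | D ω = true ∧ Dstar ω = false})
        = P (A ∩ {ω | D ω = true ∧ Dstar ω = false}) := by
      rw [← add_mul, ← ENNReal.ofReal_add (by linarith) hδpos.le]
      norm_num
    have c2 : ENNReal.ofReal (1 - cst * δ) * P (A ∩ {ω | D ω = false ∧ Dstar ω = false})
        + ENNReal.ofReal (cst * δ) * P (A ∩ {ω | D ω = false ∧ Dstar ω = false})
        = P (A ∩ {ω | D ω = false ∧ Dstar ω = false}) := by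
      rw [← add_mul, ← ENNReal.ofReal_add (by linarith) hcδ01.1]
      norm_num
    calc ENNReal.ofReal 1 * P (A ∩ {ω | Dstar ω = true})
          + ENNReal.ofReal (1 - δ) * P (A ∩ {ω | D ω = true ∧ Dstar ω = false})
          + ENNReal.ofReal (1 - cst * δ) * P (A ∩ {ω | D ω = false ∧ Dstar ω = false})
          + (ENNReal.ofReal δ * P (A ∩ {ω | D ω = true ∧ Dstar ω = false})
            + ENNReal.ofReal (cst * δ) * P (A ∩ {ω | D ω = false ∧ Dstar ω = false}))
        = P (A ∩ {ω | Dstar ω = true})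
          + (ENNReal.ofReal (1 - δ) * P (A ∩ {ω | D ω = true ∧ Dstar ω = false})
            + ENNReal.ofReal δ * P (A ∩ {ω | D ω = true ∧ Dstar ω = false}))
          + (ENNReal.ofReal (1 - cst * δ) * P (A ∩ {ω | D ω = false ∧ Dstar ω = false})
            + ENNReal.ofReal (cst * δ) * P (A ∩ {ω | D ω = false ∧ Dstar ω = false})) := by
          rw [ENNReal.ofReal_one, one_mul]; ring
      _ = P A := by rw [c1, c2, ← hpart3 A hA]
  -- the enlarged space
  have hmι : ∀ b : Bool, Measurable (fun ω : Ω => (ω, b)) :=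
    fun b => measurable_id.prodMk measurable_const
  obtain ⟨P', hP'def⟩ : ∃ μ : Measure (Ω × Bool), μ =
      P₁.map (fun ω => (ω, false)) + P₂.map (fun ω => (ω, true)) := ⟨_, rfl⟩
  have hP'app : ∀ Sset : Set (Ω × Bool), MeasurableSet Sset →
      P' Sset = P₁ ((fun ω => (ω, false)) ⁻¹' Sset) + P₂ ((fun ω => (ω, true)) ⁻¹' Sset) := by
    intro Sset hS
    rw [hP'def, Measure.add_apply, Measure.map_apply (hmι false) hS,
      Measure.map_apply (hmι true) hS]
  have hP'fin : ∀ Sset : Set (Ω × Bool), MeasurableSet Sset → P' Sset ≠ ⊤ := by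
    intro Sset hS
    rw [hP'app Sset hS]
    exact ENNReal.add_ne_top.2 ⟨hP₁fin _ (hmι false hS), hP₂fin _ (hmι true hS)⟩
  have hP'appR : ∀ Sset : Set (Ω × Bool), MeasurableSet Sset →
      (P' Sset).toReal = (P₁ ((fun ω => (ω, false)) ⁻¹' Sset)).toReal
        + (P₂ ((fun ω => (ω, true)) ⁻¹' Sset)).toReal := by
    intro Sset hS
    rw [hP'app Sset hS,
      ENNReal.toReal_add (hP₁fin _ (hmι false hS)) (hP₂fin _ (hmι true hS))]
  have hP'prob : IsProbabilityMeasure P' := by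
    constructor
    rw [hP'app univ MeasurableSet.univ]
    have : (fun ω : Ω => (ω, false)) ⁻¹' (univ : Set (Ω × Bool)) = univ := rfl
    rw [this]
    have : (fun ω : Ω => (ω, true)) ⁻¹' (univ : Set (Ω × Bool)) = univ := rfl
    rw [this, ← Measure.add_apply, hsum, measure_univ]
  -- the maps
  obtain ⟨DS', hDS'def⟩ : ∃ f : Ω × Bool → Bool,
      f = fun p => if p.2 = true then true else Dstar p.1 := ⟨_, rfl⟩
  obtain ⟨U', hU'def⟩ : ∃ f : Ω × Bool → ℝ,
      f = fun p => if p.2 = true then hf (Y p.1)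
        else (if Dstar p.1 = true then U p.1 else ψ (U p.1)) := ⟨_, rfl⟩
  have msnd : MeasurableSet {p : Ω × Bool | p.2 = true} :=
    measurable_snd (measurableSet_singleton true)
  have mDS' : Measurable DS' := by
    rw [hDS'def]
    exact Measurable.ite msnd measurable_const (hDstarm.comp measurable_fst)
  have mU' : Measurable U' := by
    rw [hU'def]
    refine Measurable.ite msnd (hhmono.measurable.comp (hYm.comp measurable_fst)) ?_
    refine Measurable.ite ((hDstarm.comp measurable_fst) (measurableSet_singleton true))
      (hUm.comp measurable_fst) (hψmono.measurable.comp (hUm.comp measurable_fst))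
  have hU'mem : ∀ p : Ω × Bool, U' p ∈ Icc (0:ℝ) 1 := by
    intro p
    rw [hU'def]
    dsimp only
    split_ifs
    · exact hhmem _
    · exact hU01 _
    · exact hψmem _
  -- distribution equality
  have hYDZ : Measurable fun ω => (Y ω, D ω, Z ω) := hYm.prodMk (hDm.prodMk hZm)
  have hmapfst : Measure.map Prod.fst P' = P := by
    rw [hP'def, Measure.map_add _ _ measurable_fst,
      Measure.map_map measurable_fst (hmι false),
      Measure.map_map measurable_fst (hmι true)]
    have e1 : (Prod.fst ∘ fun ω : Ω => (ω, false)) = id := rfl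
    have e2 : (Prod.fst ∘ fun ω : Ω => (ω, true)) = id := rfl
    rw [e1, e2, Measure.map_id, Measure.map_id, hsum]
  have hdist : Measure.map (fun p : Ω × Bool => (Y p.1, D p.1, Z p.1)) P'
      = Measure.map (fun ω => (Y ω, D ω, Z ω)) P := by
    have e : (fun p : Ω × Bool => (Y p.1, D p.1, Z p.1))
        = (fun ω => (Y ω, D ω, Z ω)) ∘ Prod.fst := rfl
    rw [e, ← Measure.map_map hYDZ measurable_fst, hmapfst]
  -- ============ statements at the level of P' ============
  have hAS : P' {p : Ω × Bool | ¬ (Y p.1 = qt (DS' p) (U' p))} = 0 := by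
    have hsub : {p : Ω × Bool | ¬ (Y p.1 = qt (DS' p) (U' p))}
        ⊆ Prod.fst ⁻¹' ({ω | q false (U ω) ≤ q true 0}
            ∪ {ω | ¬ q false (U ω) ≤ q true 1}) := by
      rintro ⟨ω, b⟩ hbad
      simp only [mem_setOf_eq] at hbad
      by_contra hN
      simp only [mem_preimage, mem_union, mem_setOf_eq, not_or, not_not] at hN
      apply hbad
      cases b with
      | false =>
        rw [hDS'def, hU'def]
        simp only [if_neg (by simp : ¬ ((ω, false).2 = true))]
        cases hD : Dstar ω with
        | true =>
          rw [if_pos rfl, hqt_true, hout ω, hD]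
        | false =>
          rw [if_neg (by simp), hqt_false, hψinv (U ω) (hU01 ω), hout ω, hD]
      | true =>
        rw [hDS'def, hU'def]
        simp only [eq_self_iff_true, if_true]
        rw [hqt_true]
        refine (hhinv (Y ω) ?_).symm
        cases hD : Dstar ω with
        | true =>
          rw [hout ω, hD]
          exact ⟨(hq true).monotoneOn (left_mem_Icc.2 zero_le_one) (hU01 ω) (hU01 ω).1,
            (hq true).monotoneOn (hU01 ω) (right_mem_Icc.2 zero_le_one) (hU01 ω).2⟩
        | false =>
          have hYq : Y ω = q false (U ω) := by rw [hout ω, hD]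
          exact ⟨hYq ▸ (not_le.1 hN.1).le, hYq ▸ hN.2⟩
    have mN : MeasurableSet ({ω | q false (U ω) ≤ q true 0}
        ∪ {ω | ¬ q false (U ω) ≤ q true 1}) :=
      (mT (q true 0)).union (mT (q true 1)).compl
    have h1 : P' (Prod.fst ⁻¹' ({ω | q false (U ω) ≤ q true 0}
        ∪ {ω | ¬ q false (U ω) ≤ q true 1})) = 0 := by
      rw [hP'app _ (measurable_fst mN)]
      have e1 : (fun ω : Ω => (ω, false)) ⁻¹' (Prod.fst ⁻¹' ({ω | q false (U ω) ≤ q true 0}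
          ∪ {ω | ¬ q false (U ω) ≤ q true 1}))
          = ({ω | q false (U ω) ≤ q true 0} ∪ {ω | ¬ q false (U ω) ≤ q true 1}) := rfl
      have e2 : (fun ω : Ω => (ω, true)) ⁻¹' (Prod.fst ⁻¹' ({ω | q false (U ω) ≤ q true 0}
          ∪ {ω | ¬ q false (U ω) ≤ q true 1}))
          = ({ω | q false (U ω) ≤ q true 0} ∪ {ω | ¬ q false (U ω) ≤ q true 1}) := rfl
      rw [e1, e2, ← Measure.add_apply, hsum]
      have := measure_union_le (μ := P) {ω | q false (U ω) ≤ q true 0}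
        {ω | ¬ q false (U ω) ≤ q true 1}
      rw [nullN0, nullN1, add_zero] at this
      exact le_antisymm this zero_le
    exact le_antisymm (h1 ▸ measure_mono hsub) zero_le
  have hco : (1 - δ) * p₀ + (1 - cst * δ) * (1 - p₀) = 1 - δ * β := by
    linear_combination -hβc
  have hid2 : cst * δ * (1 - p₀) = p₁ * (δ * β) := by
    rw [hcdef, hβdef]; field_simp
  have hNnull : P ({ω | q false (U ω) ≤ q true 0}
      ∪ {ω | ¬ q false (U ω) ≤ q true 1}) = 0 :=
    measure_union_null nullN0 nullN1
  have hUNI : ∀ u ∈ Icc (0:ℝ) 1, ∀ z : S,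
      (P' {p : Ω × Bool | U' p ≤ u ∧ Z p.1 = z}).toReal
        = u * (P' {p : Ω × Bool | Z p.1 = z}).toReal := by
    intro u hu z
    have hφuIcc : φ u ∈ Icc (0:ℝ) 1 := hφmem u hu
    have m1 : MeasurableSet {p : Ω × Bool | U' p ≤ u ∧ Z p.1 = z} :=
      (mU' measurableSet_Iic).inter ((hZm.comp measurable_fst) (measurableSet_singleton z))
    have m2 : MeasurableSet {p : Ω × Bool | Z p.1 = z} :=
      (hZm.comp measurable_fst) (measurableSet_singleton z)
    have mCz : MeasurableSet {ω | Z ω = z} := hZm (measurableSet_singleton z)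
    rw [hP'appR _ m1, hP'appR _ m2]
    have f20 : (fun ω : Ω => (ω, false)) ⁻¹' {p : Ω × Bool | Z p.1 = z}
        = {ω | Z ω = z} := rfl
    have f21 : (fun ω : Ω => (ω, true)) ⁻¹' {p : Ω × Bool | Z p.1 = z}
        = {ω | Z ω = z} := rfl
    rw [f20, f21, hP₁app _ ((hmι false) m1), hP₂app _ ((hmι true) m1),
      hP₁app _ mCz, hP₂app _ mCz]
    -- intersections for the untouched piece
    have k1 : (fun ω : Ω => (ω, false)) ⁻¹' {p : Ω × Bool | U' p ≤ u ∧ Z p.1 = z}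
        ∩ {ω | Dstar ω = true} = {ω | Dstar ω = true ∧ U ω ≤ u ∧ Z ω = z} := by
      ext ω
      rw [hU'def]
      simp only [mem_inter_iff, mem_preimage, mem_setOf_eq]
      constructor
      · rintro ⟨⟨h1, h2⟩, h3⟩
        rw [if_neg (by simp), if_pos h3] at h1
        exact ⟨h3, h1, h2⟩
      · rintro ⟨h3, h1, h2⟩
        refine ⟨⟨?_, h2⟩, h3⟩
        rw [if_neg (by simp), if_pos h3]
        exact h1
    have k2 : (fun ω : Ω => (ω, false)) ⁻¹' {p : Ω × Bool | U' p ≤ u ∧ Z p.1 = z}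
        ∩ {ω | D ω = true ∧ Dstar ω = false}
        = {ω | D ω = true ∧ Dstar ω = false ∧ U ω ≤ φ u ∧ Z ω = z} := by
      ext ω
      rw [hU'def]
      simp only [mem_inter_iff, mem_preimage, mem_setOf_eq]
      constructor
      · rintro ⟨⟨h1, h2⟩, h3, h4⟩
        rw [if_neg (by simp), if_neg (by simp [h4])] at h1
        exact ⟨h3, h4, (hψiff u hu (U ω) (hU01 ω)).1 h1, h2⟩
      · rintro ⟨h3, h4, h1, h2⟩
        refine ⟨⟨?_, h2⟩, h3, h4⟩
        rw [if_neg (by simp), if_neg (by simp [h4])]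
        exact (hψiff u hu (U ω) (hU01 ω)).2 h1
    have k3 : (fun ω : Ω => (ω, false)) ⁻¹' {p : Ω × Bool | U' p ≤ u ∧ Z p.1 = z}
        ∩ {ω | D ω = false ∧ Dstar ω = false}
        = {ω | D ω = false ∧ Dstar ω = false ∧ U ω ≤ φ u ∧ Z ω = z} := by
      ext ω
      rw [hU'def]
      simp only [mem_inter_iff, mem_preimage, mem_setOf_eq]
      constructor
      · rintro ⟨⟨h1, h2⟩, h3, h4⟩
        rw [if_neg (by simp), if_neg (by simp [h4])] at h1
        exact ⟨h3, h4, (hψiff u hu (U ω) (hU01 ω)).1 h1, h2⟩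
      · rintro ⟨h3, h4, h1, h2⟩
        refine ⟨⟨?_, h2⟩, h3, h4⟩
        rw [if_neg (by simp), if_neg (by simp [h4])]
        exact (hψiff u hu (U ω) (hU01 ω)).2 h1
    -- flipped pieces, modulo the null set
    have k4 : P ((fun ω : Ω => (ω, true)) ⁻¹' {p : Ω × Bool | U' p ≤ u ∧ Z p.1 = z}
        ∩ {ω | D ω = true ∧ Dstar ω = false})
        = P {ω | D ω = true ∧ Dstar ω = false ∧ q false (U ω) ≤ q true u ∧ Z ω = z} := by
      apply congr_aux P _ _ hNnull
      · rintro ω ⟨hpre, h3, h4⟩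
        simp only [mem_preimage, mem_setOf_eq] at hpre
        rw [hU'def] at hpre
        simp only [if_pos rfl] at hpre
        by_cases hN : ω ∈ ({ω | q false (U ω) ≤ q true 0}
            ∪ {ω | ¬ q false (U ω) ≤ q true 1})
        · exact Or.inr hN
        · left
          simp only [mem_union, mem_setOf_eq, not_or, not_not] at hN
          have hy : Y ω ∈ Icc (q true 0) (q true 1) := by
            rw [hout ω, h4]; exact ⟨(not_le.1 hN.1).le, hN.2⟩
          have h5 := (hhiff u hu (Y ω) hy).1 hpre.1
          rw [hout ω, h4] at h5
          exact ⟨h3, h4, h5, hpre.2⟩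
      · rintro ω ⟨h3, h4, h5, h6⟩
        by_cases hN : ω ∈ ({ω | q false (U ω) ≤ q true 0}
            ∪ {ω | ¬ q false (U ω) ≤ q true 1})
        · exact Or.inr hN
        · left
          simp only [mem_union, mem_setOf_eq, not_or, not_not] at hN
          have hy : Y ω ∈ Icc (q true 0) (q true 1) := by
            rw [hout ω, h4]; exact ⟨(not_le.1 hN.1).le, hN.2⟩
          have h7 : Y ω ≤ q true u := by rw [hout ω, h4]; exact h5
          refine ⟨?_, h3, h4⟩
          simp only [mem_preimage, mem_setOf_eq]
          rw [hU'def]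
          simp only [if_pos rfl]
          exact ⟨(hhiff u hu (Y ω) hy).2 h7, h6⟩
    have k5 : P ((fun ω : Ω => (ω, true)) ⁻¹' {p : Ω × Bool | U' p ≤ u ∧ Z p.1 = z}
        ∩ {ω | D ω = false ∧ Dstar ω = false})
        = P {ω | D ω = false ∧ Dstar ω = false ∧ q false (U ω) ≤ q true u ∧ Z ω = z} := by
      apply congr_aux P _ _ hNnull
      · rintro ω ⟨hpre, h3, h4⟩
        simp only [mem_preimage, mem_setOf_eq] at hpre
        rw [hU'def] at hpre
        simp only [if_pos rfl] at hpre
        by_cases hN : ω ∈ ({ω | q false (U ω) ≤ q true 0}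
            ∪ {ω | ¬ q false (U ω) ≤ q true 1})
        · exact Or.inr hN
        · left
          simp only [mem_union, mem_setOf_eq, not_or, not_not] at hN
          have hy : Y ω ∈ Icc (q true 0) (q true 1) := by
            rw [hout ω, h4]; exact ⟨(not_le.1 hN.1).le, hN.2⟩
          have h5 := (hhiff u hu (Y ω) hy).1 hpre.1
          rw [hout ω, h4] at h5
          exact ⟨h3, h4, h5, hpre.2⟩
      · rintro ω ⟨h3, h4, h5, h6⟩
        by_cases hN : ω ∈ ({ω | q false (U ω) ≤ q true 0}
            ∪ {ω | ¬ q false (U ω) ≤ q true 1})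
        · exact Or.inr hN
        · left
          simp only [mem_union, mem_setOf_eq, not_or, not_not] at hN
          have hy : Y ω ∈ Icc (q true 0) (q true 1) := by
            rw [hout ω, h4]; exact ⟨(not_le.1 hN.1).le, hN.2⟩
          have h7 : Y ω ≤ q true u := by rw [hout ω, h4]; exact h5
          refine ⟨?_, h3, h4⟩
          simp only [mem_preimage, mem_setOf_eq]
          rw [hU'def]
          simp only [if_pos rfl]
          exact ⟨(hhiff u hu (Y ω) hy).2 h7, h6⟩
    -- intersections for S2
    have l1 : {ω | Z ω = z} ∩ {ω | Dstar ω = true} = {ω | Dstar ω = true ∧ Z ω = z} := by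
      ext ω; simp only [mem_inter_iff, mem_setOf_eq]; tauto
    have l2 : {ω | Z ω = z} ∩ {ω | D ω = true ∧ Dstar ω = false}
        = {ω | D ω = true ∧ Dstar ω = false ∧ Z ω = z} := by
      ext ω; simp only [mem_inter_iff, mem_setOf_eq]; tauto
    have l3 : {ω | Z ω = z} ∩ {ω | D ω = false ∧ Dstar ω = false}
        = {ω | D ω = false ∧ Dstar ω = false ∧ Z ω = z} := by
      ext ω; simp only [mem_inter_iff, mem_setOf_eq]; tauto
    -- keyL evaluations of the flipped pieces
    have w1 : ∀ v ∈ Icc (0:ℝ) 1, (P ({ω | U ω ≤ v}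
        ∩ {ω | D ω = true ∧ Dstar ω = false ∧ Z ω = z})).toReal
        = v * (P {ω | D ω = true ∧ Dstar ω = false ∧ Z ω = z}).toReal := by
      intro v hv
      have e : {ω | U ω ≤ v} ∩ {ω | D ω = true ∧ Dstar ω = false ∧ Z ω = z}
          = {ω | D ω = true ∧ Dstar ω = false ∧ U ω ≤ v ∧ Z ω = z} := by
        ext ω; simp only [mem_inter_iff, mem_setOf_eq]; tauto
      rw [e]; exact uE1 z v hv
    have w0 : ∀ v ∈ Icc (0:ℝ) 1, (P ({ω | U ω ≤ v}
        ∩ {ω | D ω = false ∧ Dstar ω = false ∧ Z ω = z})).toReal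
        = v * (P {ω | D ω = false ∧ Dstar ω = false ∧ Z ω = z}).toReal := by
      intro v hv
      have e : {ω | U ω ≤ v} ∩ {ω | D ω = false ∧ Dstar ω = false ∧ Z ω = z}
          = {ω | D ω = false ∧ Dstar ω = false ∧ U ω ≤ v ∧ Z ω = z} := by
        ext ω; simp only [mem_inter_iff, mem_setOf_eq]; tauto
      rw [e]; exact uE0 z v hv
    have kB1 : (P {ω | D ω = true ∧ Dstar ω = false ∧ q false (U ω) ≤ q true u ∧ Z ω = z}).toReal
        = G u * (P {ω | D ω = true ∧ Dstar ω = false ∧ Z ω = z}).toReal := by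
      have h := keyL (q true u) {ω | D ω = true ∧ Dstar ω = false ∧ Z ω = z}
        ((P {ω | D ω = true ∧ Dstar ω = false ∧ Z ω = z}).toReal) (PRnn _) w1
      have e : {ω | q false (U ω) ≤ q true u} ∩ {ω | D ω = true ∧ Dstar ω = false ∧ Z ω = z}
          = {ω | D ω = true ∧ Dstar ω = false ∧ q false (U ω) ≤ q true u ∧ Z ω = z} := by
        ext ω; simp only [mem_inter_iff, mem_setOf_eq]; tauto
      rw [e] at h
      rw [h, ← hG u]
    have kB0 : (P {ω | D ω = false ∧ Dstar ω = false ∧ q false (U ω) ≤ q true u ∧ Z ω = z}).toReal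
        = G u * (P {ω | D ω = false ∧ Dstar ω = false ∧ Z ω = z}).toReal := by
      have h := keyL (q true u) {ω | D ω = false ∧ Dstar ω = false ∧ Z ω = z}
        ((P {ω | D ω = false ∧ Dstar ω = false ∧ Z ω = z}).toReal) (PRnn _) w0
      have e : {ω | q false (U ω) ≤ q true u} ∩ {ω | D ω = false ∧ Dstar ω = false ∧ Z ω = z}
          = {ω | D ω = false ∧ Dstar ω = false ∧ q false (U ω) ≤ q true u ∧ Z ω = z} := by
        ext ω; simp only [mem_inter_iff, mem_setOf_eq]; tauto
      rw [e] at h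
      rw [h, ← hG u]
    rw [k1, k2, k3, k4, k5, l1, l2, l3, hUnif' u hu true z,
      uE1 z (φ u) hφuIcc, uE0 z (φ u) hφuIcc, kB1, kB0]
    -- masses
    have hm1 : (P {ω | D ω = true ∧ Dstar ω = false ∧ Z ω = z}).toReal
        = p₀ * (P {ω | Dstar ω = false ∧ Z ω = z}).toReal := by
      have h := mass1 z univ MeasurableSet.univ
      rw [dropY, dropY2] at h
      exact h
    have hm0 : (P {ω | D ω = false ∧ Dstar ω = false ∧ Z ω = z}).toReal
        = (1 - p₀) * (P {ω | Dstar ω = false ∧ Z ω = z}).toReal := by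
      have h := mass0 z univ MeasurableSet.univ
      rw [dropY, dropY2] at h
      exact h
    rw [hm1, hm0]
    have hφu : φ u * (1 - δ * β) = u - δ * β * G u := by
      rw [hφval]
      field_simp
    linear_combination (φ u * (P {ω | Dstar ω = false ∧ Z ω = z}).toReal
        - u * (P {ω | Dstar ω = false ∧ Z ω = z}).toReal) * hco
      + (G u * (P {ω | Dstar ω = false ∧ Z ω = z}).toReal
        - u * (P {ω | Dstar ω = false ∧ Z ω = z}).toReal) * hβc
      + (P {ω | Dstar ω = false ∧ Z ω = z}).toReal * hφu
  have hASS2 : ∀ (A : Set ℝ), MeasurableSet A → ∀ (z : S) (d : Bool),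
      (P' {p : Ω × Bool | D p.1 = !d ∧ DS' p = d ∧ Y p.1 ∈ A ∧ Z p.1 = z}).toReal
        = (bif d then p₁ else p₀ - ε)
          * (P' {p : Ω × Bool | DS' p = d ∧ Y p.1 ∈ A ∧ Z p.1 = z}).toReal := by
    intro A hA z d
    have mB1 : MeasurableSet {ω | D ω = true ∧ Dstar ω = false ∧ Y ω ∈ A ∧ Z ω = z} :=
      (hDm (measurableSet_singleton true)).inter ((hDstarm (measurableSet_singleton false)).inter
        ((hYm hA).inter (hZm (measurableSet_singleton z))))
    have mB0 : MeasurableSet {ω | D ω = false ∧ Dstar ω = false ∧ Y ω ∈ A ∧ Z ω = z} :=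
      (hDm (measurableSet_singleton false)).inter ((hDstarm (measurableSet_singleton false)).inter
        ((hYm hA).inter (hZm (measurableSet_singleton z))))
    have mB2 : MeasurableSet {ω | Dstar ω = false ∧ Y ω ∈ A ∧ Z ω = z} :=
      (hDstarm (measurableSet_singleton false)).inter
        ((hYm hA).inter (hZm (measurableSet_singleton z)))
    have mB1t : MeasurableSet {ω | D ω = false ∧ Dstar ω = true ∧ Y ω ∈ A ∧ Z ω = z} :=
      (hDm (measurableSet_singleton false)).inter ((hDstarm (measurableSet_singleton true)).inter
        ((hYm hA).inter (hZm (measurableSet_singleton z))))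
    have mB2t : MeasurableSet {ω | Dstar ω = true ∧ Y ω ∈ A ∧ Z ω = z} :=
      (hDstarm (measurableSet_singleton true)).inter
        ((hYm hA).inter (hZm (measurableSet_singleton z)))
    have mW : MeasurableSet {ω | Y ω ∈ A ∧ Z ω = z} :=
      (hYm hA).inter (hZm (measurableSet_singleton z))
    have mWf : MeasurableSet {ω | D ω = false ∧ Y ω ∈ A ∧ Z ω = z} :=
      (hDm (measurableSet_singleton false)).inter
        ((hYm hA).inter (hZm (measurableSet_singleton z)))
    cases d with
    | false =>
      have m1 : MeasurableSet {p : Ω × Bool |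
          D p.1 = !false ∧ DS' p = false ∧ Y p.1 ∈ A ∧ Z p.1 = z} :=
        ((hDm.comp measurable_fst) (measurableSet_singleton (!false))).inter
          ((mDS' (measurableSet_singleton false)).inter
            (((hYm.comp measurable_fst) hA).inter
              ((hZm.comp measurable_fst) (measurableSet_singleton z))))
      have m2 : MeasurableSet {p : Ω × Bool | DS' p = false ∧ Y p.1 ∈ A ∧ Z p.1 = z} :=
        (mDS' (measurableSet_singleton false)).inter
          (((hYm.comp measurable_fst) hA).inter
            ((hZm.comp measurable_fst) (measurableSet_singleton z)))
      rw [hP'appR _ m1, hP'appR _ m2]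
      have e10 : (fun ω : Ω => (ω, false)) ⁻¹' {p : Ω × Bool |
          D p.1 = !false ∧ DS' p = false ∧ Y p.1 ∈ A ∧ Z p.1 = z}
          = {ω | D ω = true ∧ Dstar ω = false ∧ Y ω ∈ A ∧ Z ω = z} := by
        ext ω; rw [hDS'def]; simp
      have e11 : (fun ω : Ω => (ω, true)) ⁻¹' {p : Ω × Bool |
          D p.1 = !false ∧ DS' p = false ∧ Y p.1 ∈ A ∧ Z p.1 = z} = (∅ : Set Ω) := by
        ext ω; rw [hDS'def]; simp
      have e20 : (fun ω : Ω => (ω, false)) ⁻¹' {p : Ω × Bool |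
          DS' p = false ∧ Y p.1 ∈ A ∧ Z p.1 = z}
          = {ω | Dstar ω = false ∧ Y ω ∈ A ∧ Z ω = z} := by
        ext ω; rw [hDS'def]; simp
      have e21 : (fun ω : Ω => (ω, true)) ⁻¹' {p : Ω × Bool |
          DS' p = false ∧ Y p.1 ∈ A ∧ Z p.1 = z} = (∅ : Set Ω) := by
        ext ω; rw [hDS'def]; simp
      rw [e10, e11, e20, e21, hP₁app _ mB1, hP₁app _ mB2]
      have i1 : {ω | D ω = true ∧ Dstar ω = false ∧ Y ω ∈ A ∧ Z ω = z}
          ∩ {ω | Dstar ω = true} = (∅ : Set Ω) := by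
        ext ω; simp only [mem_inter_iff, mem_setOf_eq, mem_empty_iff_false, iff_false]
        rintro ⟨⟨_, h2, _, _⟩, h5⟩; rw [h2] at h5; exact Bool.noConfusion h5
      have i2 : {ω | D ω = true ∧ Dstar ω = false ∧ Y ω ∈ A ∧ Z ω = z}
          ∩ {ω | D ω = true ∧ Dstar ω = false}
          = {ω | D ω = true ∧ Dstar ω = false ∧ Y ω ∈ A ∧ Z ω = z} := by
        ext ω; simp only [mem_inter_iff, mem_setOf_eq]; tauto
      have i3 : {ω | D ω = true ∧ Dstar ω = false ∧ Y ω ∈ A ∧ Z ω = z}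
          ∩ {ω | D ω = false ∧ Dstar ω = false} = (∅ : Set Ω) := by
        ext ω; simp only [mem_inter_iff, mem_setOf_eq, mem_empty_iff_false, iff_false]
        rintro ⟨⟨h1, _, _, _⟩, h5, _⟩; rw [h1] at h5; exact Bool.noConfusion h5
      have i4 : {ω | Dstar ω = false ∧ Y ω ∈ A ∧ Z ω = z}
          ∩ {ω | Dstar ω = true} = (∅ : Set Ω) := by
        ext ω; simp only [mem_inter_iff, mem_setOf_eq, mem_empty_iff_false, iff_false]
        rintro ⟨⟨h2, _, _⟩, h5⟩; rw [h2] at h5; exact Bool.noConfusion h5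
      have i5 : {ω | Dstar ω = false ∧ Y ω ∈ A ∧ Z ω = z}
          ∩ {ω | D ω = true ∧ Dstar ω = false}
          = {ω | D ω = true ∧ Dstar ω = false ∧ Y ω ∈ A ∧ Z ω = z} := by
        ext ω; simp only [mem_inter_iff, mem_setOf_eq]; tauto
      have i6 : {ω | Dstar ω = false ∧ Y ω ∈ A ∧ Z ω = z}
          ∩ {ω | D ω = false ∧ Dstar ω = false}
          = {ω | D ω = false ∧ Dstar ω = false ∧ Y ω ∈ A ∧ Z ω = z} := by
        ext ω; simp only [mem_inter_iff, mem_setOf_eq]; tauto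
      rw [i1, i2, i3, i4, i5, i6, mass1 z A hA, mass0 z A hA]
      simp only [measure_empty, ENNReal.toReal_zero, Bool.cond_false]
      linear_combination ((P {ω | Dstar ω = false ∧ Y ω ∈ A ∧ Z ω = z}).toReal) * hkey
        - (p₀ - ε) * ((P {ω | Dstar ω = false ∧ Y ω ∈ A ∧ Z ω = z}).toReal) * hco
    | true =>
      have m1 : MeasurableSet {p : Ω × Bool |
          D p.1 = !true ∧ DS' p = true ∧ Y p.1 ∈ A ∧ Z p.1 = z} :=
        ((hDm.comp measurable_fst) (measurableSet_singleton (!true))).inter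
          ((mDS' (measurableSet_singleton true)).inter
            (((hYm.comp measurable_fst) hA).inter
              ((hZm.comp measurable_fst) (measurableSet_singleton z))))
      have m2 : MeasurableSet {p : Ω × Bool | DS' p = true ∧ Y p.1 ∈ A ∧ Z p.1 = z} :=
        (mDS' (measurableSet_singleton true)).inter
          (((hYm.comp measurable_fst) hA).inter
            ((hZm.comp measurable_fst) (measurableSet_singleton z)))
      rw [hP'appR _ m1, hP'appR _ m2]
      have e10 : (fun ω : Ω => (ω, false)) ⁻¹' {p : Ω × Bool |
          D p.1 = !true ∧ DS' p = true ∧ Y p.1 ∈ A ∧ Z p.1 = z}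
          = {ω | D ω = false ∧ Dstar ω = true ∧ Y ω ∈ A ∧ Z ω = z} := by
        ext ω; rw [hDS'def]; simp
      have e11 : (fun ω : Ω => (ω, true)) ⁻¹' {p : Ω × Bool |
          D p.1 = !true ∧ DS' p = true ∧ Y p.1 ∈ A ∧ Z p.1 = z}
          = {ω | D ω = false ∧ Y ω ∈ A ∧ Z ω = z} := by
        ext ω; rw [hDS'def]; simp
      have e20 : (fun ω : Ω => (ω, false)) ⁻¹' {p : Ω × Bool |
          DS' p = true ∧ Y p.1 ∈ A ∧ Z p.1 = z}
          = {ω | Dstar ω = true ∧ Y ω ∈ A ∧ Z ω = z} := by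
        ext ω; rw [hDS'def]; simp
      have e21 : (fun ω : Ω => (ω, true)) ⁻¹' {p : Ω × Bool |
          DS' p = true ∧ Y p.1 ∈ A ∧ Z p.1 = z}
          = {ω | Y ω ∈ A ∧ Z ω = z} := by
        ext ω; rw [hDS'def]; simp
      rw [e10, e11, e20, e21, hP₁app _ mB1t, hP₁app _ mB2t, hP₂app _ mWf, hP₂app _ mW]
      have i1 : {ω | D ω = false ∧ Dstar ω = true ∧ Y ω ∈ A ∧ Z ω = z}
          ∩ {ω | Dstar ω = true}
          = {ω | D ω = false ∧ Dstar ω = true ∧ Y ω ∈ A ∧ Z ω = z} := by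
        ext ω; simp only [mem_inter_iff, mem_setOf_eq]; tauto
      have i2 : {ω | D ω = false ∧ Dstar ω = true ∧ Y ω ∈ A ∧ Z ω = z}
          ∩ {ω | D ω = true ∧ Dstar ω = false} = (∅ : Set Ω) := by
        ext ω; simp only [mem_inter_iff, mem_setOf_eq, mem_empty_iff_false, iff_false]
        rintro ⟨⟨h1, _, _, _⟩, h5, _⟩; rw [h1] at h5; exact Bool.noConfusion h5
      have i3 : {ω | D ω = false ∧ Dstar ω = true ∧ Y ω ∈ A ∧ Z ω = z}
          ∩ {ω | D ω = false ∧ Dstar ω = false} = (∅ : Set Ω) := by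
        ext ω; simp only [mem_inter_iff, mem_setOf_eq, mem_empty_iff_false, iff_false]
        rintro ⟨⟨_, h2, _, _⟩, _, h6⟩; rw [h2] at h6; exact Bool.noConfusion h6
      have i4 : {ω | D ω = false ∧ Y ω ∈ A ∧ Z ω = z}
          ∩ {ω | D ω = true ∧ Dstar ω = false} = (∅ : Set Ω) := by
        ext ω; simp only [mem_inter_iff, mem_setOf_eq, mem_empty_iff_false, iff_false]
        rintro ⟨⟨h1, _, _⟩, h5, _⟩; rw [h1] at h5; exact Bool.noConfusion h5
      have i5 : {ω | D ω = false ∧ Y ω ∈ A ∧ Z ω = z}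
          ∩ {ω | D ω = false ∧ Dstar ω = false}
          = {ω | D ω = false ∧ Dstar ω = false ∧ Y ω ∈ A ∧ Z ω = z} := by
        ext ω; simp only [mem_inter_iff, mem_setOf_eq]; tauto
      have i6 : {ω | Dstar ω = true ∧ Y ω ∈ A ∧ Z ω = z} ∩ {ω | Dstar ω = true}
          = {ω | Dstar ω = true ∧ Y ω ∈ A ∧ Z ω = z} := by
        ext ω; simp only [mem_inter_iff, mem_setOf_eq]; tauto
      have i7 : {ω | Dstar ω = true ∧ Y ω ∈ A ∧ Z ω = z}
          ∩ {ω | D ω = true ∧ Dstar ω = false} = (∅ : Set Ω) := by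
        ext ω; simp only [mem_inter_iff, mem_setOf_eq, mem_empty_iff_false, iff_false]
        rintro ⟨⟨h2, _, _⟩, _, h6⟩; rw [h2] at h6; exact Bool.noConfusion h6
      have i8 : {ω | Dstar ω = true ∧ Y ω ∈ A ∧ Z ω = z}
          ∩ {ω | D ω = false ∧ Dstar ω = false} = (∅ : Set Ω) := by
        ext ω; simp only [mem_inter_iff, mem_setOf_eq, mem_empty_iff_false, iff_false]
        rintro ⟨⟨h2, _, _⟩, _, h6⟩; rw [h2] at h6; exact Bool.noConfusion h6
      have i9 : {ω | Y ω ∈ A ∧ Z ω = z} ∩ {ω | D ω = true ∧ Dstar ω = false}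
          = {ω | D ω = true ∧ Dstar ω = false ∧ Y ω ∈ A ∧ Z ω = z} := by
        ext ω; simp only [mem_inter_iff, mem_setOf_eq]; tauto
      have i10 : {ω | Y ω ∈ A ∧ Z ω = z} ∩ {ω | D ω = false ∧ Dstar ω = false}
          = {ω | D ω = false ∧ Dstar ω = false ∧ Y ω ∈ A ∧ Z ω = z} := by
        ext ω; simp only [mem_inter_iff, mem_setOf_eq]; tauto
      rw [i1, i2, i3, i4, i5, i6, i7, i8, i9, i10, mass1t z A hA,
        mass1 z A hA, mass0 z A hA]
      simp only [measure_empty, ENNReal.toReal_zero, Bool.cond_true]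
      linear_combination ((P {ω | Dstar ω = false ∧ Y ω ∈ A ∧ Z ω = z}).toReal) * hid2
        - p₁ * ((P {ω | Dstar ω = false ∧ Y ω ∈ A ∧ Z ω = z}).toReal) * hβc
  -- ============ wrap into a Type-0 carrier ============
  haveI := hP'prob
  have hSne : Nonempty S := by
    by_contra hS
    have hΩ : IsEmpty Ω := ⟨fun ω => (not_nonempty_iff.1 hS).false (Z ω)⟩
    have h1 : P univ = 1 := measure_univ
    rw [Set.univ_eq_empty_iff.2 hΩ, measure_empty] at h1
    exact zero_ne_one h1
  obtain ⟨enc, henc⟩ : ∃ f : S → ℕ, Function.Injective f :=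
    Countable.exists_injective_nat S
  obtain ⟨dec, hdecdef⟩ : ∃ g : ℕ → S, g = Function.invFun enc := ⟨_, rfl⟩
  have hdec : ∀ s : S, dec (enc s) = s := by
    intro s; rw [hdecdef]; exact Function.leftInverse_invFun henc s
  obtain ⟨T, hTdef⟩ : ∃ f : Ω × Bool → ℝ × Bool × Bool × ℕ × (Icc (0:ℝ) 1),
      f = fun p => (Y p.1, D p.1, DS' p, enc (Z p.1), ⟨U' p, hU'mem p⟩) := ⟨_, rfl⟩
  have hT : Measurable T := by
    rw [hTdef]
    exact (hYm.comp measurable_fst).prodMk ((hDm.comp measurable_fst).prodMk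
      (mDS'.prodMk ((Measurable.of_discrete.comp (hZm.comp measurable_fst)).prodMk
        (mU'.subtype_mk))))
  -- measurability of qt on Bool × Icc
  have mqt : Measurable (fun x : Bool × (Icc (0:ℝ) 1) => qt x.1 (x.2 : ℝ)) := by
    have m1 : Measurable (fun v : Icc (0:ℝ) 1 => qt true (v : ℝ)) := by
      have : (fun v : Icc (0:ℝ) 1 => qt true (v : ℝ))
          = (Icc (0:ℝ) 1).restrict (q true) := by
        funext v; rw [hqt_true]; rfl
      rw [this]
      exact ((hqc true).restrict).measurable
    have m0 : Measurable (fun v : Icc (0:ℝ) 1 => qt false (v : ℝ)) := by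
      have : (fun v : Icc (0:ℝ) 1 => qt false (v : ℝ))
          = fun v : Icc (0:ℝ) 1 =>
              (Icc (0:ℝ) 1).restrict (q false) ⟨φ (v : ℝ), hφmem _ v.2⟩ := by
        funext v; rw [hqt_false]; rfl
      rw [this]
      refine ((hqc false).restrict).measurable.comp (Measurable.subtype_mk ?_)
      have : (fun v : Icc (0:ℝ) 1 => φ (v : ℝ))
          = (Icc (0:ℝ) 1).restrict φ := rfl
      rw [this]
      exact (hφcont.restrict).measurable
    have : (fun x : Bool × (Icc (0:ℝ) 1) => qt x.1 (x.2 : ℝ))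
        = fun x : Bool × (Icc (0:ℝ) 1) => if x.1 = true
            then qt true (x.2 : ℝ) else qt false (x.2 : ℝ) := by
      funext x
      cases hx : x.1 <;> simp [hx]
    rw [this]
    exact Measurable.ite (measurable_fst (measurableSet_singleton true))
      (m1.comp measurable_snd) (m0.comp measurable_snd)
  refine ⟨ℝ × Bool × Bool × ℕ × (Icc (0:ℝ) 1), inferInstance, P'.map T,
    fun x => x.1, fun x => x.2.1, fun x => x.2.2.1, fun x => dec x.2.2.2.1,
    fun x => (x.2.2.2.2 : ℝ), qt,
    Measure.isProbabilityMeasure_map hT.aemeasurable,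
    measurable_fst,
    measurable_fst.comp measurable_snd,
    measurable_fst.comp (measurable_snd.comp measurable_snd),
    Measurable.of_discrete.comp (measurable_fst.comp
      (measurable_snd.comp (measurable_snd.comp measurable_snd))),
    measurable_subtype_coe.comp (measurable_snd.comp
      (measurable_snd.comp (measurable_snd.comp measurable_snd))),
    fun x => x.2.2.2.2.2,
    hqtmono, fun u _ => hqt_true u, hqτ, ?_, ?_, ?_, by linarith, ?_⟩
  · -- a.s. equation
    rw [ae_iff]
    have hms : MeasurableSet {x : ℝ × Bool × Bool × ℕ × (Icc (0:ℝ) 1) |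
        ¬ x.1 = qt x.2.2.1 (x.2.2.2.2 : ℝ)} := by
      apply MeasurableSet.compl
      apply measurableSet_eq_fun measurable_fst
      exact mqt.comp ((measurable_fst.comp (measurable_snd.comp measurable_snd)).prodMk
        (measurable_snd.comp (measurable_snd.comp (measurable_snd.comp measurable_snd))))
    rw [Measure.map_apply hT hms]
    have e : T ⁻¹' {x : ℝ × Bool × Bool × ℕ × (Icc (0:ℝ) 1) |
        ¬ x.1 = qt x.2.2.1 (x.2.2.2.2 : ℝ)}
        = {p : Ω × Bool | ¬ (Y p.1 = qt (DS' p) (U' p))} := by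
      rw [hTdef]; rfl
    rw [e]
    exact hAS
  · -- uniformity of the rank given the instrument
    intro u hu z
    have hms1 : MeasurableSet {x : ℝ × Bool × Bool × ℕ × (Icc (0:ℝ) 1) |
        (x.2.2.2.2 : ℝ) ≤ u ∧ dec x.2.2.2.1 = z} :=
      ((measurable_subtype_coe.comp (measurable_snd.comp
        (measurable_snd.comp (measurable_snd.comp measurable_snd)))) measurableSet_Iic).inter
        ((Measurable.of_discrete.comp (measurable_fst.comp
          (measurable_snd.comp (measurable_snd.comp measurable_snd))))
          (measurableSet_singleton z))
    have hms2 : MeasurableSet {x : ℝ × Bool × Bool × ℕ × (Icc (0:ℝ) 1) |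
        dec x.2.2.2.1 = z} :=
      (Measurable.of_discrete.comp (measurable_fst.comp
        (measurable_snd.comp (measurable_snd.comp measurable_snd))))
        (measurableSet_singleton z)
    rw [Measure.map_apply hT hms1, Measure.map_apply hT hms2]
    have e1 : T ⁻¹' {x : ℝ × Bool × Bool × ℕ × (Icc (0:ℝ) 1) |
        (x.2.2.2.2 : ℝ) ≤ u ∧ dec x.2.2.2.1 = z}
        = {p : Ω × Bool | U' p ≤ u ∧ Z p.1 = z} := by
      rw [hTdef]
      ext p
      simp only [mem_preimage, mem_setOf_eq]
      constructor
      · rintro ⟨h1, h2⟩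
        rw [hdec] at h2
        exact ⟨h1, h2⟩
      · rintro ⟨h1, h2⟩
        exact ⟨h1, by rw [h2, hdec]⟩
    have e2 : T ⁻¹' {x : ℝ × Bool × Bool × ℕ × (Icc (0:ℝ) 1) | dec x.2.2.2.1 = z}
        = {p : Ω × Bool | Z p.1 = z} := by
      rw [hTdef]
      ext p
      simp only [mem_preimage, mem_setOf_eq]
      constructor
      · intro h2; rw [hdec] at h2; exact h2
      · intro h2; rw [h2, hdec]
    rw [e1, e2]
    exact hUNI u hu z
  · -- Assumption 2 with p₀ - ε
    intro A hA z d
    have mYA : MeasurableSet {x : ℝ × Bool × Bool × ℕ × (Icc (0:ℝ) 1) | x.1 ∈ A} :=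
      measurable_fst hA
    have hms1 : MeasurableSet {x : ℝ × Bool × Bool × ℕ × (Icc (0:ℝ) 1) |
        x.2.1 = !d ∧ x.2.2.1 = d ∧ x.1 ∈ A ∧ dec x.2.2.2.1 = z} := by
      refine MeasurableSet.inter ?_ (MeasurableSet.inter ?_ (MeasurableSet.inter mYA ?_))
      · exact (measurable_fst.comp measurable_snd) (measurableSet_singleton (!d))
      · exact (measurable_fst.comp (measurable_snd.comp measurable_snd))
          (measurableSet_singleton d)
      · exact (Measurable.of_discrete.comp (measurable_fst.comp
          (measurable_snd.comp (measurable_snd.comp measurable_snd))))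
          (measurableSet_singleton z)
    have hms2 : MeasurableSet {x : ℝ × Bool × Bool × ℕ × (Icc (0:ℝ) 1) |
        x.2.2.1 = d ∧ x.1 ∈ A ∧ dec x.2.2.2.1 = z} := by
      refine MeasurableSet.inter ?_ (MeasurableSet.inter mYA ?_)
      · exact (measurable_fst.comp (measurable_snd.comp measurable_snd))
          (measurableSet_singleton d)
      · exact (Measurable.of_discrete.comp (measurable_fst.comp
          (measurable_snd.comp (measurable_snd.comp measurable_snd))))
          (measurableSet_singleton z)
    rw [Measure.map_apply hT hms1, Measure.map_apply hT hms2]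
    have e1 : T ⁻¹' {x : ℝ × Bool × Bool × ℕ × (Icc (0:ℝ) 1) |
        x.2.1 = !d ∧ x.2.2.1 = d ∧ x.1 ∈ A ∧ dec x.2.2.2.1 = z}
        = {p : Ω × Bool | D p.1 = !d ∧ DS' p = d ∧ Y p.1 ∈ A ∧ Z p.1 = z} := by
      rw [hTdef]
      ext p
      simp only [mem_preimage, mem_setOf_eq]
      constructor
      · rintro ⟨h1, h2, h3, h4⟩
        rw [hdec] at h4
        exact ⟨h1, h2, h3, h4⟩
      · rintro ⟨h1, h2, h3, h4⟩
        exact ⟨h1, h2, h3, by rw [h4, hdec]⟩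
    have e2 : T ⁻¹' {x : ℝ × Bool × Bool × ℕ × (Icc (0:ℝ) 1) |
        x.2.2.1 = d ∧ x.1 ∈ A ∧ dec x.2.2.2.1 = z}
        = {p : Ω × Bool | DS' p = d ∧ Y p.1 ∈ A ∧ Z p.1 = z} := by
      rw [hTdef]
      ext p
      simp only [mem_preimage, mem_setOf_eq]
      constructor
      · rintro ⟨h2, h3, h4⟩
        rw [hdec] at h4
        exact ⟨h2, h3, h4⟩
      · rintro ⟨h2, h3, h4⟩
        exact ⟨h2, h3, by rw [h4, hdec]⟩
    rw [e1, e2]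
    exact hASS2 A hA z d
  · -- distribution equality
    have e : (fun x : ℝ × Bool × Bool × ℕ × (Icc (0:ℝ) 1) => (x.1, x.2.1, dec x.2.2.2.1))
        ∘ T = fun p : Ω × Bool => (Y p.1, D p.1, Z p.1) := by
      rw [hTdef]
      funext p
      simp only [Function.comp_apply]
      rw [hdec]
    have hmeas2 : Measurable (fun x : ℝ × Bool × Bool × ℕ × (Icc (0:ℝ) 1) =>
        (x.1, x.2.1, dec x.2.2.2.1)) :=
      measurable_fst.prodMk ((measurable_fst.comp measurable_snd).prodMk
        (Measurable.of_discrete.comp (measurable_fst.comp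
          (measurable_snd.comp (measurable_snd.comp measurable_snd)))))
    rw [Measure.map_map hmeas2 hT, e, hdist]
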